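/- For any prime p > 3, the rational number ∑_{k=0}^{p-1} (1 + 2^{−k})·u_k(2,2)·H_k is congruent to 0 modulo p. -/

import Mathlib

open Finset

/-- The Lucas sequence `u_n(A,B)`. -/
def lucasU (A B : ℤ) : ℕ → ℤ
  | 0 => 0
  | 1 => 1
  | n + 2 => A * lucasU A B (n + 1) - B * lucasU A B n

/-- `x ≡ y (mod p^m)` for rational numbers: `x - y = p^m * r` with `p ∤ den r`. -/
def ratCong (p m : ℕ) (x y : ℚ) : Prop :=
  ∃ r : ℚ, x - y = (p : ℚ) ^ m * r ∧ ¬ (p ∣ r.den)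

namespace Stmt10Aux

/-- Companion sequence: `Vs n = v_n(2,2)/2` where `v` is the companion Lucas sequence. -/
def Vs : ℕ → ℤ
  | 0 => 1
  | 1 => 1
  | n + 2 => 2 * Vs (n + 1) - 2 * Vs n

local notation "uu" => lucasU 2 2

def α : GaussianInt := ⟨1, 1⟩
def β : GaussianInt := ⟨1, -1⟩
def ii : GaussianInt := ⟨0, 1⟩

lemma uu_rec (n : ℕ) : uu (n+2) = 2 * uu (n+1) - 2 * uu n := rfl
lemma Vs_rec (n : ℕ) : Vs (n+2) = 2 * Vs (n+1) - 2 * Vs n := rfl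

lemma alpha_pow (k : ℕ) : α ^ k = ⟨Vs k, uu k⟩ := by
  induction k using Nat.twoStepInduction with
  | zero => ext <;> simp [Vs, lucasU]
  | one => ext <;> simp [α, Vs, lucasU]
  | more n ih1 ih2 =>
      have h2 : α ^ 2 = 2 * α - 2 := by
        ext <;> simp [α, sq, Zsqrtd.re_mul, Zsqrtd.im_mul]
      have : α ^ (n+2) = 2 * α ^ (n+1) - 2 * α ^ n := by
        calc α ^ (n+2) = α ^ n * α ^ 2 := by ring
        _ = α ^ n * (2 * α - 2) := by rw [h2]
        _ = 2 * (α ^ n * α) - 2 * α ^ n := by ring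
        _ = 2 * α ^ (n+1) - 2 * α ^ n := by rw [← pow_succ]
      rw [this, ih1, ih2, uu_rec, Vs_rec]
      ext <;> simp <;> ring

lemma beta_pow (k : ℕ) : β ^ k = ⟨Vs k, -(uu k)⟩ := by
  induction k using Nat.twoStepInduction with
  | zero => ext <;> simp [Vs, lucasU]
  | one => ext <;> simp [β, Vs, lucasU]
  | more n ih1 ih2 =>
      have h2 : β ^ 2 = 2 * β - 2 := by
        ext <;> simp [β, sq, Zsqrtd.re_mul, Zsqrtd.im_mul]
      have : β ^ (n+2) = 2 * β ^ (n+1) - 2 * β ^ n := by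
        calc β ^ (n+2) = β ^ n * β ^ 2 := by ring
        _ = β ^ n * (2 * β - 2) := by rw [h2]
        _ = 2 * (β ^ n * β) - 2 * β ^ n := by ring
        _ = 2 * β ^ (n+1) - 2 * β ^ n := by rw [← pow_succ]
      rw [this, ih1, ih2, uu_rec, Vs_rec]
      ext <;> simp <;> ring

lemma Vs_succ (n : ℕ) : Vs (n + 1) = Vs n - uu n := by
  have h := alpha_pow (n + 1)
  rw [pow_succ, alpha_pow n] at h
  have := congrArg Zsqrtd.re h
  simpa [α, Zsqrtd.re_mul, sub_eq_add_neg] using this.symm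

lemma Vs_add_four (n : ℕ) : Vs (n + 4) = -4 * Vs n := by
  have h4 : α ^ 4 = -4 := by
    ext <;> simp [α, pow_succ, Zsqrtd.re_mul, Zsqrtd.im_mul] <;> ring
  have h := alpha_pow (n + 4)
  rw [pow_add, alpha_pow n, h4] at h
  have h2 := congrArg Zsqrtd.re h
  simp [Zsqrtd.re_mul] at h2
  rw [← h2]; ring

lemma Vs_four_mul (t r : ℕ) : Vs (4 * t + r) = (-4) ^ t * Vs r := by
  induction t with
  | zero => simp
  | succ t ih =>
      have : 4 * (t + 1) + r = (4 * t + r) + 4 := by ring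
      rw [this, Vs_add_four, ih]
      ring

def reH : GaussianInt →+ ℤ := { toFun := Zsqrtd.re, map_zero' := rfl, map_add' := fun _ _ => rfl }
def imH : GaussianInt →+ ℤ := { toFun := Zsqrtd.im, map_zero' := rfl, map_add' := fun _ _ => rfl }

lemma sum_S1 (p : ℕ) (hp5 : 5 ≤ p) (hodd : p % 2 = 1) :
    ∑ j ∈ range (p-1), (-1:ℤ)^j * (p.choose (j+1) : ℤ) * Vs (j+1) = 1 - Vs p := by
  obtain ⟨n, rfl⟩ : ∃ n, p = n + 2 := ⟨p - 2, by omega⟩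
  simp only [show n + 2 - 1 = n + 1 from rfl]
  have hoddN : Odd (n + 2) := Nat.odd_iff.2 hodd
  have hb := add_pow (-α) 1 (n+2)
  rw [Finset.sum_range_succ, Finset.sum_range_succ'] at hb
  have hsum : ∑ j ∈ range (n+1), (((-1:ℤ)^j * (((n+2).choose (j+1) : ℕ) : ℤ) : ℤ) : GaussianInt) * α^(j+1)
      = -(∑ j ∈ range (n+1), (-α)^(j+1) * (1:GaussianInt)^(n+2-(j+1)) * ((n+2).choose (j+1) : GaussianInt)) := by
    rw [← Finset.sum_neg_distrib]
    refine Finset.sum_congr rfl fun j hj => ?_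
    have : ((-α)^(j+1) : GaussianInt) = (-1)^(j+1) * α^(j+1) := by rw [neg_pow]
    rw [this]
    push_cast
    ring
  have f0 : (-α)^0 * (1:GaussianInt)^(n+2-0) * ((n+2).choose 0 : GaussianInt) = 1 := by simp
  have fN : (-α)^(n+2) * (1:GaussianInt)^(n+2-(n+2)) * ((n+2).choose (n+2) : GaussianInt)
      = -α^(n+2) := by simp [hoddN.neg_pow]
  rw [f0, fN] at hb
  have key : ∑ j ∈ range (n+1), (((-1:ℤ)^j * (((n+2).choose (j+1) : ℕ) : ℤ) : ℤ) : GaussianInt) * α^(j+1)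
      = 1 - (-α + 1)^(n+2) - α^(n+2) := by
    rw [hsum]
    linear_combination hb
  have hre := congrArg reH key
  rw [map_sum] at hre
  have hterm : ∀ j ∈ range (n+1), reH ((((-1:ℤ)^j * (((n+2).choose (j+1) : ℕ) : ℤ) : ℤ) : GaussianInt) * α^(j+1))
      = (-1:ℤ)^j * (((n+2).choose (j+1) : ℕ) : ℤ) * Vs (j+1) := by
    intro j hj
    show ((((-1:ℤ)^j * ((((n+2).choose (j+1) : ℕ)) : ℤ) : ℤ) : GaussianInt) * α^(j+1)).re = _
    rw [alpha_pow, Zsqrtd.re_smul]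
  rw [Finset.sum_congr rfl hterm] at hre
  rw [hre]
  have h1a : (-α + 1 : GaussianInt) = ⟨0,-1⟩ := by ext <;> simp [α]
  obtain ⟨m, hm⟩ : ∃ m, n + 2 = 2*m + 1 := hoddN
  have hsq : ((⟨0,-1⟩ : GaussianInt))^2 = -1 := by
    ext <;> simp [sq, Zsqrtd.re_mul, Zsqrtd.im_mul]
  have hpr : ((⟨0,-1⟩ : GaussianInt)^(n+2)).re = 0 := by
    rw [hm, pow_succ, pow_mul, hsq]
    have : ((-1 : GaussianInt))^m = (((-1:ℤ)^m : ℤ) : GaussianInt) := by push_cast; ring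
    rw [this, Zsqrtd.re_smul]
    simp
  show reH _ = _
  rw [map_sub, map_sub, h1a]
  show (1:GaussianInt).re - ((⟨0,-1⟩:GaussianInt)^(n+2)).re - ((α^(n+2)).re) = _
  rw [hpr, alpha_pow]
  simp

lemma sum_S2 (p : ℕ) (hp5 : 5 ≤ p) (hodd : p % 2 = 1) :
    ∑ j ∈ range (p-1), (-1:ℤ)^j * (p.choose (j+1) : ℤ) * (2^(p-2-j) * uu (j+2))
      = 2^(p-1) - Vs p := by
  obtain ⟨n, rfl⟩ : ∃ n, p = n + 2 := ⟨p - 2, by omega⟩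
  simp only [show n + 2 - 1 = n + 1 from rfl, show n + 2 - 2 = n from rfl]
  have hoddN : Odd (n + 2) := Nat.odd_iff.2 hodd
  have hab : (α * β : GaussianInt) = 2 := by
    ext <;> simp [α, β, Zsqrtd.re_mul, Zsqrtd.im_mul]
  have hsqa : (α^2 : GaussianInt) = 2 * ii := by
    ext <;> simp [α, ii, sq, Zsqrtd.re_mul, Zsqrtd.im_mul]
  have hib : (ii * β : GaussianInt) = α := by
    ext <;> simp [α, β, ii, Zsqrtd.re_mul, Zsqrtd.im_mul]
  have hia : (ii * α : GaussianInt) = -β := by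
    ext <;> simp [α, β, ii, Zsqrtd.re_mul, Zsqrtd.im_mul]
  have hii2 : (ii^2 : GaussianInt) = -1 := by
    ext <;> simp [ii, sq, Zsqrtd.re_mul, Zsqrtd.im_mul]
  have hb := add_pow (-1 : GaussianInt) β (n+2)
  rw [Finset.sum_range_succ, Finset.sum_range_succ'] at hb
  have f0 : (-1:GaussianInt)^0 * β^(n+2-0) * ((n+2).choose 0 : GaussianInt) = β^(n+2) := by simp
  have fN : (-1:GaussianInt)^(n+2) * β^(n+2-(n+2)) * ((n+2).choose (n+2) : GaussianInt) = -1 := by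
    simp [hoddN.neg_one_pow]
  rw [f0, fN] at hb
  have key1 : ∑ j ∈ range (n+1),
        (((-1:ℤ)^j * (((n+2).choose (j+1) : ℕ) : ℤ) : ℤ) : GaussianInt) * (ii * α^(n+1) * β^(n+1-j))
      = ii * α^(n+1) * (β^(n+2) - 1 - (-1+β)^(n+2)) := by
    have h1 : ∑ j ∈ range (n+1),
          (((-1:ℤ)^j * (((n+2).choose (j+1) : ℕ) : ℤ) : ℤ) : GaussianInt) * (ii * α^(n+1) * β^(n+1-j))
        = ii * α^(n+1) *
          ∑ j ∈ range (n+1), -((-1:GaussianInt)^(j+1) * β^(n+2-(j+1)) * ((n+2).choose (j+1) : GaussianInt)) := by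
      rw [Finset.mul_sum]
      refine Finset.sum_congr rfl fun j hj => ?_
      have : n + 2 - (j + 1) = n + 1 - j := by omega
      rw [this]
      push_cast
      ring
    rw [h1, Finset.sum_neg_distrib]
    linear_combination (ii * α^(n+1)) * hb
  have hterm2 : ∀ j ∈ range (n+1),
      (((-1:ℤ)^j * (((n+2).choose (j+1) : ℕ) : ℤ) : ℤ) : GaussianInt) * (ii * α^(n+1) * β^(n+1-j))
      = (((-1:ℤ)^j * (((n+2).choose (j+1) : ℕ) : ℤ) : ℤ) : GaussianInt) * ((2:GaussianInt)^(n-j) * α^(j+2)) := by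
    intro j hj
    have hj' : j ≤ n := by
      have := Finset.mem_range.mp hj; omega
    congr 1
    have h1 : n + 1 - j = (n - j) + 1 := by omega
    have h2 : n + 1 = j + ((n - j) + 1) := by omega
    rw [h1, h2, pow_add]
    calc ii * (α^j * α^((n-j)+1)) * β^((n-j)+1)
        = ii * α^j * (α*β)^((n-j)+1) := by rw [mul_pow]; ring
      _ = ii * α^j * 2^((n-j)+1) := by rw [hab]
      _ = (2:GaussianInt)^(n-j) * α^j * (2*ii) := by ring
      _ = (2:GaussianInt)^(n-j) * α^j * α^2 := by rw [hsqa]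
      _ = (2:GaussianInt)^(n-j) * α^(j+2) := by rw [pow_add]; ring
  rw [Finset.sum_congr rfl hterm2] at key1
  have hr1 : ii * α^(n+1) * β^(n+2) = (2:GaussianInt)^(n+1) * α := by
    calc ii * α^(n+1) * β^(n+2) = (ii*β) * (α*β)^(n+1) := by rw [mul_pow]; ring
      _ = α * 2^(n+1) := by rw [hib, hab]
      _ = (2:GaussianInt)^(n+1) * α := by ring
  have hr2 : ii * α^(n+1) * (-1+β)^(n+2) = β^(n+1) := by
    have hmb : (-1 + β : GaussianInt) = -ii := by
      ext <;> simp [β, ii]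
    have hevn : Even (n+1) := by
      rcases Nat.even_or_odd (n+1) with h | h
      · exact h
      · exfalso; rw [Nat.odd_iff] at h; omega
    rw [hmb, hoddN.neg_pow]
    calc ii * α^(n+1) * -(ii^(n+2)) = -(ii^2) * ((ii*α)^(n+1)) := by rw [mul_pow]; ring
      _ = 1 * (-β)^(n+1) := by rw [hii2, hia]; ring
      _ = β^(n+1) := by rw [hevn.neg_pow, one_mul]
  have key2 : ∑ j ∈ range (n+1),
        (((-1:ℤ)^j * (((n+2).choose (j+1) : ℕ) : ℤ) : ℤ) : GaussianInt) * ((2:GaussianInt)^(n-j) * α^(j+2))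
      = (2:GaussianInt)^(n+1) * α - ii * α^(n+1) - β^(n+1) := by
    rw [key1]
    linear_combination -hr2 + hr1 + (0:GaussianInt)
  have him := congrArg imH key2
  rw [map_sum] at him
  have hterm3 : ∀ j ∈ range (n+1),
      imH ((((-1:ℤ)^j * (((n+2).choose (j+1) : ℕ) : ℤ) : ℤ) : GaussianInt) * ((2:GaussianInt)^(n-j) * α^(j+2)))
      = (-1:ℤ)^j * (((n+2).choose (j+1) : ℕ) : ℤ) * (2^(n-j) * uu (j+2)) := by
    intro j hj
    show ((((-1:ℤ)^j * (((n+2).choose (j+1) : ℕ) : ℤ) : ℤ) : GaussianInt) * ((2:GaussianInt)^(n-j) * α^(j+2))).im = _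
    rw [alpha_pow]
    have : (((((-1:ℤ)^j * (((n+2).choose (j+1) : ℕ) : ℤ)) : ℤ) : GaussianInt) *
          ((2:GaussianInt)^(n-j) * (⟨Vs (j+2), uu (j+2)⟩ : GaussianInt)))
        = (((((-1:ℤ)^j * (((n+2).choose (j+1) : ℕ) : ℤ) * 2^(n-j)) : ℤ) : GaussianInt) *
          (⟨Vs (j+2), uu (j+2)⟩ : GaussianInt)) := by
      push_cast
      ring
    rw [this, Zsqrtd.im_smul]
    ring
  rw [Finset.sum_congr rfl hterm3] at him
  rw [him]
  rw [map_sub, map_sub]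
  have i1 : imH ((2:GaussianInt)^(n+1) * α) = 2^(n+1) := by
    have : ((2:GaussianInt)^(n+1) * α) = (((2^(n+1) : ℤ)) : GaussianInt) * α := by push_cast; ring
    rw [this]
    show ((((2^(n+1) : ℤ)) : GaussianInt) * α).im = _
    rw [Zsqrtd.im_smul]
    simp [α]
  have i2 : imH (ii * α^(n+1)) = Vs (n+1) := by
    show (ii * α^(n+1)).im = _
    rw [alpha_pow]
    simp [ii, Zsqrtd.im_mul]
  have i3 : imH (β^(n+1)) = -(uu (n+1)) := by
    show (β^(n+1)).im = _
    rw [beta_pow]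
  rw [i1, i2, i3]
  have hvs := Vs_succ (n+1)
  rw [show n+1+1 = n+2 from rfl] at hvs
  omega

lemma prime_five_le (p : ℕ) (hp : p.Prime) (hp3 : 3 < p) : 5 ≤ p := by
  have h4 : p ≠ 4 := by rintro rfl; norm_num at hp
  omega

lemma prime_odd (p : ℕ) (hp : p.Prime) (hp3 : 3 < p) : p % 2 = 1 :=
  Nat.odd_iff.mp (hp.odd_of_ne_two (by omega))

lemma dvd_one_sub_Vs (p : ℕ) (hp : p.Prime) (hp3 : 3 < p) : (p:ℤ) ∣ 1 - Vs p := by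
  rw [← sum_S1 p (prime_five_le p hp hp3) (prime_odd p hp hp3)]
  refine Finset.dvd_sum fun j hj => ?_
  have hj' : j + 1 < p := by have := Finset.mem_range.mp hj; omega
  have hc : (p:ℤ) ∣ ((p.choose (j+1) : ℕ) : ℤ) :=
    Int.natCast_dvd_natCast.mpr (Nat.Prime.dvd_choose_self hp (Nat.succ_ne_zero j) hj')
  exact (hc.mul_left _).mul_right _

lemma W_identity (p : ℕ) (hp5 : 5 ≤ p) (hodd : p % 2 = 1) :
    ∑ j ∈ range (p-1), (-1:ℤ)^j * (p.choose (j+1) : ℤ) *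
        (2^(p-1) * Vs (j+1) + 2^(p-2-j) * uu (j+2))
      = 2^p - (2^(p-1)+1) * Vs p := by
  have h1 := sum_S1 p hp5 hodd
  have h2 := sum_S2 p hp5 hodd
  have hsplit : ∑ j ∈ range (p-1), (-1:ℤ)^j * (p.choose (j+1) : ℤ) *
        (2^(p-1) * Vs (j+1) + 2^(p-2-j) * uu (j+2))
      = 2^(p-1) * ∑ j ∈ range (p-1), (-1:ℤ)^j * (p.choose (j+1):ℤ) * Vs (j+1)
        + ∑ j ∈ range (p-1), (-1:ℤ)^j * (p.choose (j+1):ℤ) * (2^(p-2-j) * uu (j+2)) := by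
    rw [Finset.mul_sum, ← Finset.sum_add_distrib]
    exact Finset.sum_congr rfl fun j hj => by ring
  rw [hsplit, h1, h2]
  have hpp : (2:ℤ)^p = 2 * 2^(p-1) := by
    rw [← pow_succ']
    congr 1
    omega
  rw [hpp]; ring

lemma W_sq_dvd (p : ℕ) (hp : p.Prime) (hp3 : 3 < p) :
    (p:ℤ)^2 ∣ 2^p - (2^(p-1)+1) * Vs p := by
  have hp5 := prime_five_le p hp hp3
  have hodd := prime_odd p hp hp3
  set m := (p-1)/2 with hm
  have hp2m : p = 2*m + 1 := by omega
  obtain ⟨e, he1, hVp⟩ : ∃ e : ℤ, e * e = 1 ∧ Vs p = e * 2^m := by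
    have h4 : p % 4 = 1 ∨ p % 4 = 3 := by omega
    set t := p / 4 with ht
    rcases h4 with h | h
    · have hpt : p = 4*t + 1 := by omega
      have hmt : m = 2*t := by omega
      refine ⟨(-1:ℤ)^t, ?_, ?_⟩
      · rw [← pow_add]
        exact Even.neg_one_pow ⟨t, by ring⟩
      · rw [hpt, Vs_four_mul t 1]
        have hv1 : Vs 1 = 1 := rfl
        rw [hv1, mul_one, hmt]
        rw [show ((-4):ℤ) = -1 * 2^2 from by norm_num, mul_pow, pow_mul]
    · have hpt : p = 4*t + 3 := by omega
      have hmt : m = 2*t + 1 := by omega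
      refine ⟨(-1:ℤ)^(t+1), ?_, ?_⟩
      · rw [← pow_add]
        exact Even.neg_one_pow ⟨t+1, by ring⟩
      · rw [hpt, Vs_four_mul t 3]
        have hv3 : Vs 3 = -2 := by norm_num [Vs]
        rw [hv3, hmt]
        have h2t : ((2:ℤ))^(2*t+1) = (2^2)^t * 2 := by rw [pow_succ, pow_mul]
        rw [h2t, show ((-4):ℤ) = -1*2^2 from by norm_num, mul_pow, pow_succ]
        ring
  have hd1 : (p:ℤ) ∣ 2^m - e := by
    have h0 := dvd_one_sub_Vs p hp hp3
    have heq : 2^m - e = -e * (1 - Vs p) + (1 - e*e) * 2^m := by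
      rw [hVp]; ring
    rw [heq, he1]
    simp only [sub_self, zero_mul, add_zero]
    exact Dvd.dvd.mul_left h0 _
  have hfact : 2^p - (2^(p-1)+1) * Vs p = -e * 2^m * ((2^m - e) * (2^m - e)) := by
    rw [hVp]
    have e1 : (2:ℤ)^p = 2 * 2^m * 2^m := by
      rw [show p = m + m + 1 from by omega, pow_add, pow_add]; ring
    have e2 : (2:ℤ)^(p-1) = 2^m * 2^m := by
      rw [show p - 1 = m + m from by omega, pow_add]
    rw [e1, e2]
    linear_combination (e * 2^m - 2 * 2^m * 2^m) * he1
  rw [hfact]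
  have hsq : (p:ℤ)^2 ∣ (2^m - e) * (2^m - e) := by
    rw [pow_two]
    exact mul_dvd_mul hd1 hd1
  exact Dvd.dvd.mul_left hsq _

lemma dvd_Zsum (p : ℕ) (hp : p.Prime) (hp3 : 3 < p) :
    (p:ℤ) ∣ ∑ j ∈ range (p-1), (-1:ℤ)^j * ((p.choose (j+1) / p : ℕ) : ℤ) *
        (2^(p-1) * Vs (j+1) + 2^(p-2-j) * uu (j+2)) := by
  have hp5 := prime_five_le p hp hp3
  have hodd := prime_odd p hp hp3
  have hpZ : (p:ℤ) * (∑ j ∈ range (p-1), (-1:ℤ)^j * ((p.choose (j+1) / p : ℕ) : ℤ) *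
        (2^(p-1) * Vs (j+1) + 2^(p-2-j) * uu (j+2)))
      = ∑ j ∈ range (p-1), (-1:ℤ)^j * (p.choose (j+1) : ℤ) *
        (2^(p-1) * Vs (j+1) + 2^(p-2-j) * uu (j+2)) := by
    rw [Finset.mul_sum]
    refine Finset.sum_congr rfl fun j hj => ?_
    have hj' : j + 1 < p := by have := Finset.mem_range.mp hj; omega
    have hdvd : p ∣ p.choose (j+1) := Nat.Prime.dvd_choose_self hp (Nat.succ_ne_zero j) hj'
    have hb : (p * (p.choose (j+1) / p) : ℕ) = p.choose (j+1) := Nat.mul_div_cancel' hdvd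
    calc (p:ℤ) * ((-1:ℤ)^j * ((p.choose (j+1) / p : ℕ) : ℤ) *
          (2^(p-1) * Vs (j+1) + 2^(p-2-j) * uu (j+2)))
        = (-1:ℤ)^j * (((p * (p.choose (j+1) / p) : ℕ)) : ℤ) *
          (2^(p-1) * Vs (j+1) + 2^(p-2-j) * uu (j+2)) := by push_cast; ring
      _ = _ := by rw [hb]
  have hsq := W_sq_dvd p hp hp3
  rw [← W_identity p hp5 hodd, ← hpZ] at hsq
  obtain ⟨c, hc⟩ := hsq
  have hpne : (p:ℤ) ≠ 0 := Int.natCast_ne_zero.mpr (by omega)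
  refine ⟨c, mul_left_cancel₀ hpne ?_⟩
  rw [hc]; ring

lemma abel_sum {R : Type*} [CommRing R] (a h : ℕ → R) (n : ℕ) :
    ∑ k ∈ range (n+1), a k * h k
      = (∑ j ∈ range (n+1), a j) * h n
        - ∑ j ∈ range n, (∑ i ∈ range (j+1), a i) * (h (j+1) - h j) := by
  induction n with
  | zero => simp
  | succ n ih =>
      rw [Finset.sum_range_succ (f := fun k => a k * h k), ih,
        Finset.sum_range_succ (f := fun j => (∑ i ∈ range (j+1), a i) * (h (j+1) - h j)),
        Finset.sum_range_succ a (n+1), Finset.sum_range_succ a n]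
      ring

lemma hsum_zero (p : ℕ) (hp : p.Prime) (hp3 : 3 < p) :
    ∑ j ∈ range (p-1), ((j+1 : ℕ) : ZMod p)⁻¹ = 0 := by
  haveI : Fact p.Prime := ⟨hp⟩
  have hodd : p % 2 = 1 := Nat.odd_iff.mp (hp.odd_of_ne_two (by omega))
  refine Finset.sum_involution (fun j _ => p - 2 - j) ?_ ?_ ?_ ?_
  · intro j hj
    show ((j+1 : ℕ) : ZMod p)⁻¹ + ((p - 2 - j + 1 : ℕ) : ZMod p)⁻¹ = 0
    have hj' : j < p - 1 := Finset.mem_range.mp hj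
    have hadd : ((p - 2 - j + 1) + (j+1) : ℕ) = p := by omega
    have hcast : ((p - 2 - j + 1 : ℕ) : ZMod p) = -((j+1 : ℕ) : ZMod p) := by
      have h1 := congrArg (Nat.cast : ℕ → ZMod p) hadd
      push_cast at h1
      rw [ZMod.natCast_self] at h1
      push_cast
      linear_combination h1
    rw [hcast, inv_neg]
    ring
  · intro j hj _
    have hj' : j < p - 1 := Finset.mem_range.mp hj
    show p - 2 - j ≠ j
    omega
  · intro j hj
    have hj' : j < p - 1 := Finset.mem_range.mp hj
    show p - 2 - j ∈ range (p-1)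
    exact Finset.mem_range.mpr (by omega)
  · intro j hj
    have hj' : j < p - 1 := Finset.mem_range.mp hj
    show p - 2 - (p - 2 - j) = j
    omega

lemma choose_neg_one_pow (p : ℕ) (hp : p.Prime) : ∀ j, j < p → (((p-1).choose j : ℕ) : ZMod p) = (-1)^j := by
  haveI : Fact p.Prime := ⟨hp⟩
  intro j
  induction j with
  | zero => simp
  | succ j ih =>
      intro hj
      have ihj := ih (by omega)
      have hrec : (p-1).choose (j+1) * (j+1) = (p-1).choose j * (p-1-j) :=
        Nat.choose_succ_right_eq (p-1) j
      have hcast : (((p-1).choose (j+1) : ℕ) : ZMod p) * ((j+1 : ℕ) : ZMod p)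
          = (-1)^j * ((p-1-j : ℕ) : ZMod p) := by
        rw [← Nat.cast_mul, hrec, Nat.cast_mul, ihj]
      have hneg : ((p-1-j : ℕ) : ZMod p) = -(((j+1 : ℕ)) : ZMod p) := by
        have hsum : ((p-1-j) + (j+1) : ℕ) = p := by omega
        have h1 := congrArg (Nat.cast : ℕ → ZMod p) hsum
        push_cast at h1
        rw [ZMod.natCast_self] at h1
        push_cast at h1 ⊢
        linear_combination h1
      have hne : ((j+1 : ℕ) : ZMod p) ≠ 0 := by
        rw [Ne, ZMod.natCast_eq_zero_iff]
        intro hdvd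
        have := Nat.le_of_dvd (by omega) hdvd
        omega
      have hfin : (((p-1).choose (j+1) : ℕ) : ZMod p) * ((j+1:ℕ) : ZMod p)
          = (-1)^(j+1) * ((j+1:ℕ):ZMod p) := by
        rw [hcast, hneg]; ring
      exact mul_right_cancel₀ hne hfin

lemma inv_eq_choose_div (p : ℕ) (hp : p.Prime) (hp3 : 3 < p) (j : ℕ) (hj : j < p - 1) :
    ((j+1 : ℕ) : ZMod p)⁻¹ = (-1)^j * ((p.choose (j+1) / p : ℕ) : ZMod p) := by
  haveI : Fact p.Prime := ⟨hp⟩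
  have h1 : p * (p-1).choose j = p.choose (j+1) * (j+1) := by
    have h := Nat.add_one_mul_choose_eq (p-1) j
    rwa [show p - 1 + 1 = p from by omega] at h
  have hdvd : p ∣ p.choose (j+1) := Nat.Prime.dvd_choose_self hp (Nat.succ_ne_zero j) (by omega)
  have hb : p * (p.choose (j+1) / p) = p.choose (j+1) := Nat.mul_div_cancel' hdvd
  have h2 : p * ((p-1).choose j) = p * ((p.choose (j+1) / p) * (j+1)) := by
    rw [← mul_assoc, hb, h1]
  have h3 : (p-1).choose j = (p.choose (j+1) / p) * (j+1) :=
    Nat.eq_of_mul_eq_mul_left (by omega) h2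
  have h4 : ((-1 : ZMod p))^j = ((p.choose (j+1)/p : ℕ) : ZMod p) * ((j+1:ℕ) : ZMod p) := by
    rw [← choose_neg_one_pow p hp j (by omega), h3, Nat.cast_mul]
  have hmul : ((-1)^j * ((p.choose (j+1)/p : ℕ) : ZMod p)) * ((j+1:ℕ):ZMod p) = 1 := by
    rw [mul_assoc, ← h4, ← pow_add]
    exact Even.neg_one_pow ⟨j, by ring⟩
  exact inv_eq_of_mul_eq_one_left hmul

lemma A_closed {R : Type*} [CommRing R] (w : R) (hw : 2 * w = 1) (t : ℕ) :
    ∑ i ∈ range t, (1 + w^i) * ((uu i : ℤ) : R)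
      = 2 - ((Vs t : ℤ) : R) - ((uu (t+1) : ℤ) : R) * w^t := by
  induction t with
  | zero => norm_num [Vs, lucasU]
  | succ t ih =>
      rw [Finset.sum_range_succ, ih]
      have hu : ((uu (t+1+1) : ℤ) : R) = 2 * ((uu (t+1) : ℤ):R) - 2 * ((uu t : ℤ):R) := by
        have : uu (t+1+1) = 2 * uu (t+1) - 2 * uu t := rfl
        rw [this]; push_cast; ring
      have hv : ((Vs (t+1) : ℤ) : R) = ((Vs t : ℤ):R) - ((uu t : ℤ):R) := by
        rw [Vs_succ]; push_cast; ring
      rw [hv, hu]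
      have hwt : (w^(t+1) : R) * 2 = w^t := by
        calc w^(t+1) * 2 = w^t * (2*w) := by rw [pow_succ]; ring
        _ = w^t := by rw [hw, mul_one]
      linear_combination (((uu (t+1) : ℤ):R) - ((uu t : ℤ):R)) * hwt

lemma zmod_main (p : ℕ) (hp : p.Prime) (hp3 : 3 < p) :
    ∑ k ∈ range p, (1 + ((2:ZMod p)⁻¹)^k) * ((uu k : ℤ) : ZMod p) *
      (∑ j ∈ range k, ((j+1 : ℕ) : ZMod p)⁻¹) = 0 := by
  haveI : Fact p.Prime := ⟨hp⟩
  set w := (2:ZMod p)⁻¹ with hwdef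
  have h2ne : (2 : ZMod p) ≠ 0 := by
    rw [show (2:ZMod p) = ((2:ℕ):ZMod p) from by norm_num, Ne, ZMod.natCast_eq_zero_iff]
    intro h
    have := Nat.le_of_dvd (by omega) h
    omega
  have hw : (2:ZMod p) * w = 1 := mul_inv_cancel₀ h2ne
  have habel := abel_sum (R := ZMod p) (fun k => (1 + w^k) * ((uu k : ℤ) : ZMod p))
    (fun n => ∑ j ∈ range n, ((j+1 : ℕ) : ZMod p)⁻¹) (p-1)
  rw [show p - 1 + 1 = p from by omega] at habel
  rw [habel, hsum_zero p hp hp3, mul_zero, zero_sub, neg_eq_zero]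
  have hd : ∀ j : ℕ, (∑ i ∈ range (j+1), ((i+1 : ℕ) : ZMod p)⁻¹)
      - (∑ i ∈ range j, ((i+1 : ℕ) : ZMod p)⁻¹) = ((j+1 : ℕ) : ZMod p)⁻¹ := by
    intro j
    rw [Finset.sum_range_succ]
    ring
  have hstep : ∀ j ∈ range (p-1),
      (∑ i ∈ range (j+1), (1 + w^i) * ((uu i : ℤ) : ZMod p)) *
        ((∑ i ∈ range (j+1), ((i+1 : ℕ) : ZMod p)⁻¹) - (∑ i ∈ range j, ((i+1 : ℕ) : ZMod p)⁻¹))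
      = (2 - ((Vs (j+1) : ℤ) : ZMod p) - ((uu (j+1+1) : ℤ) : ZMod p) * w^(j+1)) *
          ((j+1 : ℕ) : ZMod p)⁻¹ := by
    intro j hj
    rw [hd j, A_closed w hw (j+1)]
  rw [Finset.sum_congr rfl hstep]
  -- split off the constant 2 part
  have hsplit : ∑ j ∈ range (p-1),
      (2 - ((Vs (j+1) : ℤ) : ZMod p) - ((uu (j+1+1) : ℤ) : ZMod p) * w^(j+1)) * ((j+1 : ℕ) : ZMod p)⁻¹
      = 2 * (∑ j ∈ range (p-1), ((j+1 : ℕ) : ZMod p)⁻¹)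
        - ∑ j ∈ range (p-1),
            (((Vs (j+1) : ℤ) : ZMod p) + ((uu (j+1+1) : ℤ) : ZMod p) * w^(j+1)) * ((j+1 : ℕ) : ZMod p)⁻¹ := by
    rw [Finset.mul_sum, ← Finset.sum_sub_distrib]
    exact Finset.sum_congr rfl fun j hj => by ring
  rw [hsplit, hsum_zero p hp hp3, mul_zero, zero_sub, neg_eq_zero]
  -- multiply by 2^(p-1)
  have h2p : (2:ZMod p)^(p-1) ≠ 0 := pow_ne_zero _ h2ne
  have hmain : (2:ZMod p)^(p-1) * ∑ j ∈ range (p-1),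
      (((Vs (j+1) : ℤ) : ZMod p) + ((uu (j+1+1) : ℤ) : ZMod p) * w^(j+1)) * ((j+1 : ℕ) : ZMod p)⁻¹
      = ((∑ j ∈ range (p-1), (-1:ℤ)^j * ((p.choose (j+1) / p : ℕ) : ℤ) *
          (2^(p-1) * Vs (j+1) + 2^(p-2-j) * uu (j+2)) : ℤ) : ZMod p) := by
    rw [Finset.mul_sum, Int.cast_sum]
    refine Finset.sum_congr rfl fun j hj => ?_
    have hj' : j < p - 1 := Finset.mem_range.mp hj
    rw [inv_eq_choose_div p hp hp3 j hj']
    have hww : (2:ZMod p)^(p-1) * w^(j+1) = (2:ZMod p)^(p-2-j) := by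
      have h1 : (2:ZMod p)^(p-1) = (2:ZMod p)^(p-2-j) * 2^(j+1) := by
        rw [← pow_add]; congr 1; omega
      rw [h1, mul_assoc, ← mul_pow, hw, one_pow, mul_one]
    have hjj : j + 2 = j + 1 + 1 := rfl
    rw [hjj]
    generalize (p.choose (j+1) / p : ℕ) = b
    push_cast
    rw [← hww]
    ring
  have hz := dvd_Zsum p hp hp3
  rw [← ZMod.intCast_zmod_eq_zero_iff_dvd] at hz
  rw [← hmain] at hz
  rcases mul_eq_zero.mp hz with h | h
  · exact absurd h h2p
  · exact h

end Stmt10Aux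

theorem stmt10 (p : ℕ) (hp : p.Prime) (hp3 : 3 < p) :
    ratCong p 1
      (∑ k ∈ Finset.range p,
        (1 + (2 : ℚ) ^ (-(k : ℤ))) * (lucasU 2 2 k : ℚ) * harmonic k) 0 := by
  classical
  haveI : Fact p.Prime := ⟨hp⟩
  set S : ℚ := ∑ k ∈ Finset.range p,
      (1 + (2 : ℚ) ^ (-(k : ℤ))) * (lucasU 2 2 k : ℚ) * harmonic k with hS
  set F : ℕ := (p-1).factorial with hF
  set D : ℕ := 2^(p-1) * F with hD
  set c : ℕ → ℕ := fun k => ∑ j ∈ Finset.range k, F / (j+1) with hc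
  set I : ℤ := ∑ k ∈ Finset.range p,
      2^(p-1-k) * (2^k+1) * lucasU 2 2 k * (c k : ℤ) with hI
  have hDpos : 0 < D := by
    rw [hD]
    exact Nat.mul_pos (Nat.pow_pos (by norm_num)) (Nat.factorial_pos _)
  have hDQ : ((D:ℕ) : ℚ) ≠ 0 := by exact_mod_cast hDpos.ne'
  -- Step 1: (I : ℚ) = S * D
  have hcast : (I : ℚ) = S * D := by
    rw [hI, hS, Finset.sum_mul]
    push_cast
    refine Finset.sum_congr rfl fun k hk => ?_
    have hk' : k < p := Finset.mem_range.mp hk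
    have hck : ((c k : ℕ) : ℚ) = (F:ℚ) * harmonic k := by
      rw [hc, harmonic]
      push_cast
      rw [Finset.mul_sum]
      refine Finset.sum_congr rfl fun j hj => ?_
      have hj' : j < k := Finset.mem_range.mp hj
      have hdvd : (j+1) ∣ F := by
        rw [hF]
        exact Nat.dvd_factorial (by omega) (by omega)
      have hq : ((F / (j+1) : ℕ) : ℚ) = (F:ℚ) / ((j+1 : ℕ):ℚ) :=
        Nat.cast_div hdvd (by positivity)
      rw [hq]
      push_cast
      rw [div_eq_mul_inv]
    rw [hck]
    have hpow : ((2:ℚ)^(p-1-k)) * 2^k = 2^(p-1) := by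
      rw [← pow_add]; congr 1; omega
    have hzpow : (2:ℚ)^(-(k:ℤ)) = ((2:ℚ)^k)⁻¹ := by
      rw [zpow_neg, zpow_natCast]
    have hDq : ((D:ℕ):ℚ) = 2^(p-1) * (F:ℚ) := by
      rw [hD]; push_cast; ring
    rw [hzpow, hDq, ← hpow]
    have h2k : ((2:ℚ)^k) ≠ 0 := by positivity
    field_simp
  -- Step 2: (I : ZMod p) = 0
  have hIzero : (I : ZMod p) = 0 := by
    have hmain := Stmt10Aux.zmod_main p hp hp3
    have h2ne : (2 : ZMod p) ≠ 0 := by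
      rw [show (2:ZMod p) = ((2:ℕ):ZMod p) from by norm_num, Ne,
        ZMod.natCast_eq_zero_iff]
      intro h
      have := Nat.le_of_dvd (by omega) h
      omega
    have hw : (2:ZMod p) * (2:ZMod p)⁻¹ = 1 := mul_inv_cancel₀ h2ne
    have hckz : ∀ k, k < p → ((c k : ℕ) : ZMod p)
        = ((F:ℕ) : ZMod p) * ∑ j ∈ Finset.range k, ((j+1:ℕ) : ZMod p)⁻¹ := by
      intro k hk
      rw [hc]
      push_cast
      rw [Finset.mul_sum]
      refine Finset.sum_congr rfl fun j hj => ?_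
      have hj' : j < k := Finset.mem_range.mp hj
      have hdvd : (j+1) ∣ F := by
        rw [hF]
        exact Nat.dvd_factorial (by omega) (by omega)
      have hne : ((j+1:ℕ) : ZMod p) ≠ 0 := by
        rw [Ne, ZMod.natCast_eq_zero_iff]
        intro h
        have := Nat.le_of_dvd (by omega) h
        omega
      have hmd : ((j+1) * (F/(j+1)) : ℕ) = F := Nat.mul_div_cancel' hdvd
      have h2 := congrArg (Nat.cast : ℕ → ZMod p) hmd
      push_cast at h2
      calc ((F/(j+1):ℕ):ZMod p)
          = (((j:ZMod p)+1) * ((F/(j+1):ℕ):ZMod p)) * ((j:ZMod p)+1)⁻¹ := by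
            rw [mul_comm ((j:ZMod p)+1) _, mul_assoc, mul_inv_cancel₀ ?hne, mul_one]
            case hne => push_cast at hne ⊢; exact hne
        _ = ((F:ℕ):ZMod p) * ((j:ZMod p)+1)⁻¹ := by rw [h2]
    have hterm : ∀ k ∈ Finset.range p,
        ((2^(p-1-k) * (2^k+1) * lucasU 2 2 k * (c k : ℤ) : ℤ) : ZMod p)
        = ((F:ℕ) : ZMod p) * (2:ZMod p)^(p-1) *
          ((1 + ((2:ZMod p)⁻¹)^k) * ((lucasU 2 2 k : ℤ) : ZMod p) *
            (∑ j ∈ Finset.range k, ((j+1:ℕ) : ZMod p)⁻¹)) := by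
      intro k hk
      have hk' : k < p := Finset.mem_range.mp hk
      have hww : (2:ZMod p)^(p-1-k) = (2:ZMod p)^(p-1) * ((2:ZMod p)⁻¹)^k := by
        have h1 : (2:ZMod p)^(p-1) = (2:ZMod p)^(p-1-k) * 2^k := by
          rw [← pow_add]; congr 1; omega
        rw [h1, mul_assoc, ← mul_pow, hw, one_pow, mul_one]
      have h1k : ((2:ZMod p)⁻¹)^k * (2:ZMod p)^k = 1 := by
        rw [← mul_pow, inv_mul_cancel₀ h2ne, one_pow]
      simp only [Int.cast_mul, Int.cast_pow, Int.cast_add, Int.cast_one,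
        Int.cast_natCast, Int.cast_ofNat, Int.cast_two]
      rw [hckz k hk', hww]
      linear_combination (((lucasU 2 2 k : ℤ):ZMod p) * ((F:ℕ):ZMod p) *
        (∑ j ∈ Finset.range k, ((j+1:ℕ) : ZMod p)⁻¹) * (2:ZMod p)^(p-1)) * h1k
    rw [hI, Int.cast_sum, Finset.sum_congr rfl hterm, ← Finset.mul_sum, hmain, mul_zero]
  -- Step 3: conclude
  have hpI : (p:ℤ) ∣ I := by rwa [ZMod.intCast_zmod_eq_zero_iff_dvd] at hIzero
  obtain ⟨J, hJ⟩ := hpI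
  refine ⟨(J : ℚ) / ((D:ℕ) : ℚ), ?_, ?_⟩
  · rw [sub_zero, pow_one]
    have hSID : S = (I:ℚ) / ((D:ℕ):ℚ) := by
      rw [hcast]
      field_simp
    rw [hSID, hJ]
    push_cast
    field_simp
  · intro hpd
    have hden := Rat.den_dvd (J:ℤ) ((D:ℕ):ℤ)
    rw [Rat.divInt_eq_div] at hden
    push_cast at hden
    have hpD : (p:ℤ) ∣ ((D:ℕ):ℤ) :=
      dvd_trans (Int.natCast_dvd_natCast.mpr hpd) hden
    have hnat : p ∣ D := by exact_mod_cast hpD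
    rw [hD] at hnat
    rcases (Nat.Prime.dvd_mul hp).mp hnat with h | h
    · have h2 := Nat.Prime.dvd_of_dvd_pow hp h
      have := Nat.le_of_dvd (by norm_num) h2
      omega
    · rw [hF, Nat.Prime.dvd_factorial hp] at h
      omega
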